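/- Let (W,S) be the affine Coxeter system of type G̃_2: S = {0,1,2} with m(0,1) = 3, m(1,2) = 6, m(0,2) = 2. Then the homology of the weighted complex C_*(W) is: H_0 ≅ R/(Φ_2); H_1 ≅ R/(Φ_2) ⊕ R/(Φ_3); H_2 ≅ R; and H_k = 0 for all k ≥ 3. -/

import Mathlib

open Polynomial CoxeterSystem

set_option synthInstance.maxHeartbeats 1000000
set_option maxHeartbeats 1000000

noncomputable section

/-- The ring `R = ℚ[q,q⁻¹]` of Laurent polynomials over `ℚ`. -/
abbrev R : Type := LaurentPolynomial ℚ

/-- The image of the `d`-th cyclotomic polynomial `Φ_d` in `R`. -/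
def cyc (d : ℕ) : R := Polynomial.toLaurent (Polynomial.cyclotomic d ℚ)

/-- The `R`-module `R/(Φ_d)`. -/
abbrev CycQuot (d : ℕ) := R ⧸ Ideal.span {cyc d}

variable {B : Type*} [Fintype B] [LinearOrder B] {W : Type*} [Group W]
  {M : CoxeterMatrix B} (cs : CoxeterSystem M W)

/-- The standard parabolic subgroup `W_σ` generated by `σ ⊆ S`. -/
def parabolic (σ : Finset B) : Subgroup W := Subgroup.closure (cs.simple '' σ)

/-- The Poincaré polynomial `W_σ(q) = Σ_{w ∈ W_σ} q^{ℓ(w)}` of the standard parabolic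
subgroup `W_σ` (defined to be `0` if `W_σ` is infinite). -/
def poin (σ : Finset B) : ℚ[X] :=
  letI := Classical.dec ((parabolic cs σ : Set W).Finite)
  if h : (parabolic cs σ : Set W).Finite then ∑ w ∈ h.toFinset, X ^ cs.length w else 0

/-- The set of simplices `σ ∈ K_W` with `|σ| = k`, i.e. the subsets of `S` of
cardinality `k` generating a finite standard parabolic subgroup. -/
abbrev KW (k : ℕ) := {σ : Finset B // σ.card = k ∧ (parabolic cs σ : Set W).Finite}

noncomputable instance (k : ℕ) : Fintype (KW cs k) := Fintype.ofFinite _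

/-- The coefficient of `e_τ` in `∂ e_σ`: it is
`(−1)^{#{t ∈ σ : t < s}} · W_σ(q)/W_{σ∖{s}}(q)` if `τ = σ ∖ {s}` for some `s ∈ σ`,
and `0` otherwise. -/
def bcoeff (σ τ : Finset B) : R :=
  ∑ s ∈ σ, if τ = σ.erase s then
      (-1 : R) ^ (σ.filter (fun t => t < s)).card *
        Polynomial.toLaurent (poin cs σ / poin cs τ)
    else 0

/-- The boundary map `∂ : C_{k+1} → C_k` of the weighted complex `C_*(W)`, where
`C_k = ⊕_{σ ∈ K_W, |σ| = k} R·e_σ`. -/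
def bdry (k : ℕ) : (KW cs (k + 1) → R) →ₗ[R] (KW cs k → R) :=
  Matrix.mulVecLin (Matrix.of fun (τ : KW cs k) (σ : KW cs (k + 1)) => bcoeff cs σ.1 τ.1)

/-- The submodule of cycles in degree `k` of the weighted complex. -/
def cycles : (k : ℕ) → Submodule R (KW cs k → R)
  | 0 => ⊤
  | (k + 1) => LinearMap.ker (bdry cs k)

/-- The `k`-th homology `H_k(C_*(W))` of the weighted complex: cycles modulo boundaries. -/
abbrev Hgy (k : ℕ) :=
  cycles cs k ⧸ Submodule.comap (cycles cs k).subtype (LinearMap.range (bdry cs k))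

end


set_option maxRecDepth 40000
set_option linter.unusedSectionVars false
set_option linter.unusedVariables false
set_option linter.unusedTactic false
noncomputable section
namespace G2aux

abbrev Mtx := Matrix (Fin 3) (Fin 3) ℤ

def mA : Fin 3 → Mtx :=
  ![!![-1,0,2;-1,1,1;0,0,1], !![-1,3,0;0,1,0;0,0,1], !![1,0,0;1,-1,0;0,0,1]]

def matProd (ω : List (Fin 3)) : Mtx := (ω.map mA).prod

variable {W : Type*} [Group W] {Mat : CoxeterMatrix (Fin 3)} (cs : CoxeterSystem Mat W)
variable (h01 : Mat.M 0 1 = 3) (h12 : Mat.M 1 2 = 6) (h02 : Mat.M 0 2 = 2)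

include h01 h12 h02 in
theorem liftable : Mat.IsLiftable mA := by
  have h10 : Mat.M 1 0 = 3 := (Mat.symmetric 0 1) ▸ h01
  have h21 : Mat.M 2 1 = 6 := (Mat.symmetric 1 2) ▸ h12
  have h20 : Mat.M 2 0 = 2 := (Mat.symmetric 0 2) ▸ h02
  intro i j
  fin_cases i <;> fin_cases j
  · show (mA 0 * mA 0) ^ Mat.M 0 0 = 1
    rw [Mat.diagonal 0]; decide
  · show (mA 0 * mA 1) ^ Mat.M 0 1 = 1
    rw [h01]; decide
  · show (mA 0 * mA 2) ^ Mat.M 0 2 = 1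
    rw [h02]; decide
  · show (mA 1 * mA 0) ^ Mat.M 1 0 = 1
    rw [h10]; decide
  · show (mA 1 * mA 1) ^ Mat.M 1 1 = 1
    rw [Mat.diagonal 1]; decide
  · show (mA 1 * mA 2) ^ Mat.M 1 2 = 1
    rw [h12]; decide
  · show (mA 2 * mA 0) ^ Mat.M 2 0 = 1
    rw [h20]; decide
  · show (mA 2 * mA 1) ^ Mat.M 2 1 = 1
    rw [h21]; decide
  · show (mA 2 * mA 2) ^ Mat.M 2 2 = 1
    rw [Mat.diagonal 2]; decide

def phi : W →* Mtx := cs.lift ⟨mA, liftable h01 h12 h02⟩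

theorem phi_simple (i : Fin 3) : phi cs h01 h12 h02 (cs.simple i) = mA i :=
  cs.lift_apply_simple (liftable h01 h12 h02) i

theorem phi_word (ω : List (Fin 3)) : phi cs h01 h12 h02 (cs.wordProd ω) = matProd ω := by
  unfold wordProd matProd
  rw [map_list_prod, List.map_map]
  congr 1
  exact List.map_congr_left fun i _ => phi_simple cs h01 h12 h02 i

include h01 h12 h02 in
theorem wne {ω ω' : List (Fin 3)} (h : matProd ω ≠ matProd ω') :
    cs.wordProd ω ≠ cs.wordProd ω' := fun he => h (by
  rw [← phi_word cs h01 h12 h02, ← phi_word cs h01 h12 h02, he])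

include h01 h12 h02 in
theorem length_ne {w : W} {k : ℕ} {A : Mtx} (hA : phi cs h01 h12 h02 w = A)
    (h : ∀ f : Fin k → Fin 3, A ≠ matProd (List.ofFn f)) : cs.length w ≠ k := by
  intro hk
  obtain ⟨ω, hl, rfl⟩ := cs.exists_reduced_word w
  rw [CoxeterSystem.IsReduced, hk] at hl
  subst hl
  refine h (fun i => ω.get i) ?_
  rw [← hA, phi_word]
  rw [show (List.ofFn fun i => ω.get i) = ω from List.ofFn_get ω]

include h01 h12 h02 in
theorem length_step {w w' : W} {c : Fin 3} {k : ℕ} (hw' : w' = cs.simple c * w)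
    (hw : cs.length w = k) {A : Mtx} (hA : phi cs h01 h12 h02 w' = A)
    (hne : ∀ f : Fin (k - 1) → Fin 3, A ≠ matProd (List.ofFn f)) :
    cs.length w' = k + 1 := by
  subst hw'
  rcases cs.length_simple_mul w c with h | h
  · rw [h, hw]
  · exact absurd (by omega : cs.length (cs.simple c * w) = k - 1)
      (length_ne cs h01 h12 h02 hA hne)


theorem pair_closure (x y : W) (hx : x * x = 1) (hy : y * y = 1) (T : Set W)
    (h1 : (1 : W) ∈ T) (hmx : ∀ t ∈ T, x * t ∈ T) (hmy : ∀ t ∈ T, y * t ∈ T)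
    (hsub : T ⊆ ↑(Subgroup.closure {x, y})) :
    (Subgroup.closure {x, y} : Set W) = T := by
  refine Set.Subset.antisymm (fun w hw => ?_) hsub
  have hxi : x⁻¹ = x := inv_eq_of_mul_eq_one_right hx
  have hyi : y⁻¹ = y := inv_eq_of_mul_eq_one_right hy
  have hS : ({x, y} : Set W) ∪ ({x, y} : Set W)⁻¹ = {x, y} := by
    rw [Set.inv_insert, Set.inv_singleton, hxi, hyi, Set.union_self]
  have hw' : w ∈ Submonoid.closure ({x, y} : Set W) := by
    have h2 := Subgroup.closure_toSubmonoid ({x, y} : Set W)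
    rw [hS] at h2
    rw [← h2]
    exact hw
  refine Submonoid.closure_induction_left (motive := fun t _ => t ∈ T) h1 ?_ hw'
  rintro z hz t _ ht
  rcases hz with rfl | hz
  · exact hmx t ht
  · rw [Set.mem_singleton_iff] at hz
    subst hz
    exact hmy t ht


theorem word_mem (i j : Fin 3) (ω : List (Fin 3)) (h : ∀ c ∈ ω, c = i ∨ c = j) :
    cs.wordProd ω ∈ Subgroup.closure {cs.simple i, cs.simple j} := by
  induction ω with
  | nil => rw [cs.wordProd_nil]; exact one_mem _
  | cons c ω ih =>
    rw [cs.wordProd_cons]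
    refine mul_mem (Subgroup.subset_closure ?_) (ih fun d hd => h d (List.mem_cons_of_mem c hd))
    rcases h c (List.mem_cons_self (a := c) (l := ω)) with rfl | rfl
    · left; rfl
    · right; rfl


include h01 h12 h02 in
theorem len_nil : cs.length (cs.wordProd ([] : List (Fin 3))) = 0 := by
  rw [cs.wordProd_nil]; exact cs.length_one

include h01 h12 h02 in
theorem len_0 : cs.length (cs.wordProd [0]) = 1 :=
  length_step cs h01 h12 h02 (cs.wordProd_cons 0 []) (len_nil cs h01 h12 h02)
    (phi_word cs h01 h12 h02 _) (by decide)

include h01 h12 h02 in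
theorem len_1 : cs.length (cs.wordProd [1]) = 1 :=
  length_step cs h01 h12 h02 (cs.wordProd_cons 1 []) (len_nil cs h01 h12 h02)
    (phi_word cs h01 h12 h02 _) (by decide)

include h01 h12 h02 in
theorem len_2 : cs.length (cs.wordProd [2]) = 1 :=
  length_step cs h01 h12 h02 (cs.wordProd_cons 2 []) (len_nil cs h01 h12 h02)
    (phi_word cs h01 h12 h02 _) (by decide)

include h01 h12 h02 in
theorem len_01 : cs.length (cs.wordProd [0,1]) = 2 :=
  length_step cs h01 h12 h02 (cs.wordProd_cons 0 [1]) (len_1 cs h01 h12 h02)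
    (phi_word cs h01 h12 h02 _) (by decide)

include h01 h12 h02 in
theorem len_10 : cs.length (cs.wordProd [1,0]) = 2 :=
  length_step cs h01 h12 h02 (cs.wordProd_cons 1 [0]) (len_0 cs h01 h12 h02)
    (phi_word cs h01 h12 h02 _) (by decide)

include h01 h12 h02 in
theorem len_02 : cs.length (cs.wordProd [0,2]) = 2 :=
  length_step cs h01 h12 h02 (cs.wordProd_cons 0 [2]) (len_2 cs h01 h12 h02)
    (phi_word cs h01 h12 h02 _) (by decide)

include h01 h12 h02 in
theorem len_20 : cs.length (cs.wordProd [2,0]) = 2 :=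
  length_step cs h01 h12 h02 (cs.wordProd_cons 2 [0]) (len_0 cs h01 h12 h02)
    (phi_word cs h01 h12 h02 _) (by decide)

include h01 h12 h02 in
theorem len_12 : cs.length (cs.wordProd [1,2]) = 2 :=
  length_step cs h01 h12 h02 (cs.wordProd_cons 1 [2]) (len_2 cs h01 h12 h02)
    (phi_word cs h01 h12 h02 _) (by decide)

include h01 h12 h02 in
theorem len_21 : cs.length (cs.wordProd [2,1]) = 2 :=
  length_step cs h01 h12 h02 (cs.wordProd_cons 2 [1]) (len_1 cs h01 h12 h02)
    (phi_word cs h01 h12 h02 _) (by decide)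

include h01 h12 h02 in
theorem len_010 : cs.length (cs.wordProd [0,1,0]) = 3 :=
  length_step cs h01 h12 h02 (cs.wordProd_cons 0 [1,0]) (len_10 cs h01 h12 h02)
    (phi_word cs h01 h12 h02 _) (by decide)

include h01 h12 h02 in
theorem len_101 : cs.length (cs.wordProd [1,0,1]) = 3 :=
  length_step cs h01 h12 h02 (cs.wordProd_cons 1 [0,1]) (len_01 cs h01 h12 h02)
    (phi_word cs h01 h12 h02 _) (by decide)

include h01 h12 h02 in
theorem len_121 : cs.length (cs.wordProd [1,2,1]) = 3 :=
  length_step cs h01 h12 h02 (cs.wordProd_cons 1 [2,1]) (len_21 cs h01 h12 h02)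
    (phi_word cs h01 h12 h02 _) (by decide)

include h01 h12 h02 in
theorem len_212 : cs.length (cs.wordProd [2,1,2]) = 3 :=
  length_step cs h01 h12 h02 (cs.wordProd_cons 2 [1,2]) (len_12 cs h01 h12 h02)
    (phi_word cs h01 h12 h02 _) (by decide)

include h01 h12 h02 in
theorem len_1212 : cs.length (cs.wordProd [1,2,1,2]) = 4 :=
  length_step cs h01 h12 h02 (cs.wordProd_cons 1 [2,1,2]) (len_212 cs h01 h12 h02)
    (phi_word cs h01 h12 h02 _) (by decide)

include h01 h12 h02 in
theorem len_2121 : cs.length (cs.wordProd [2,1,2,1]) = 4 :=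
  length_step cs h01 h12 h02 (cs.wordProd_cons 2 [1,2,1]) (len_121 cs h01 h12 h02)
    (phi_word cs h01 h12 h02 _) (by decide)

include h01 h12 h02 in
theorem len_12121 : cs.length (cs.wordProd [1,2,1,2,1]) = 5 :=
  length_step cs h01 h12 h02 (cs.wordProd_cons 1 [2,1,2,1]) (len_2121 cs h01 h12 h02)
    (phi_word cs h01 h12 h02 _) (by decide)

include h01 h12 h02 in
theorem len_21212 : cs.length (cs.wordProd [2,1,2,1,2]) = 5 :=
  length_step cs h01 h12 h02 (cs.wordProd_cons 2 [1,2,1,2]) (len_1212 cs h01 h12 h02)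
    (phi_word cs h01 h12 h02 _) (by decide)

include h01 h12 h02 in
theorem len_121212 : cs.length (cs.wordProd [1,2,1,2,1,2]) = 6 :=
  length_step cs h01 h12 h02 (cs.wordProd_cons 1 [2,1,2,1,2]) (len_21212 cs h01 h12 h02)
    (phi_word cs h01 h12 h02 _) (by decide)

include h01 h12 h02 in
theorem htop12 : cs.wordProd ([1,2,1,2,1,2] : List (Fin 3)) = cs.wordProd [2,1,2,1,2,1] := by
  have h := cs.prod_alternatingWord_eq_prod_alternatingWord_sub 1 2 6 (by rw [h12]; norm_num)
  rw [h12] at h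
  rw [show alternatingWord (1:Fin 3) 2 6 = [1,2,1,2,1,2] by decide,
      show ((6*2 - 6 : ℕ)) = 6 from rfl,
      show alternatingWord (2:Fin 3) 1 6 = [2,1,2,1,2,1] by decide] at h
  exact h

include h01 h12 h02 in
theorem htop01 : cs.wordProd ([1,0,1] : List (Fin 3)) = cs.wordProd [0,1,0] := by
  have h := cs.prod_alternatingWord_eq_prod_alternatingWord_sub 0 1 3 (by rw [h01]; norm_num)
  rw [h01] at h
  rw [show alternatingWord (0:Fin 3) 1 3 = [1,0,1] by decide,
      show ((3*2 - 3 : ℕ)) = 3 from rfl,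
      show alternatingWord (1:Fin 3) 0 3 = [0,1,0] by decide] at h
  exact h

include h01 h12 h02 in
theorem htop02 : cs.wordProd ([0,2] : List (Fin 3)) = cs.wordProd [2,0] := by
  have h := cs.prod_alternatingWord_eq_prod_alternatingWord_sub 0 2 2 (by rw [h02]; norm_num)
  rw [h02] at h
  rw [show alternatingWord (0:Fin 3) 2 2 = [0,2] by decide,
      show ((2*2 - 2 : ℕ)) = 2 from rfl,
      show alternatingWord (2:Fin 3) 0 2 = [2,0] by decide] at h
  exact h

include h01 h12 h02 in
theorem pset12 : (parabolic cs ({1,2} : Finset (Fin 3)) : Set W) =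
    {cs.wordProd ([] : List (Fin 3)), cs.wordProd [1], cs.wordProd [2], cs.wordProd [1,2], cs.wordProd [2,1], cs.wordProd [1,2,1], cs.wordProd [2,1,2], cs.wordProd [1,2,1,2], cs.wordProd [2,1,2,1], cs.wordProd [1,2,1,2,1], cs.wordProd [2,1,2,1,2], cs.wordProd [1,2,1,2,1,2]} := by
  have himg : cs.simple '' ↑({1,2} : Finset (Fin 3)) = {cs.simple 1, cs.simple 2} := by
    rw [Finset.coe_insert, Finset.coe_singleton, Set.image_insert_eq, Set.image_singleton]
  rw [parabolic, himg]
  refine pair_closure _ _ (cs.simple_mul_simple_self 1) (cs.simple_mul_simple_self 2) _ ?_ ?_ ?_ ?_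
  · rw [← cs.wordProd_nil]; simp
  · intro t ht
    simp only [Set.mem_insert_iff, Set.mem_singleton_iff] at ht
    rcases ht with rfl | rfl | rfl | rfl | rfl | rfl | rfl | rfl | rfl | rfl | rfl | rfl
    · rw [show cs.simple 1 * cs.wordProd ([] : List (Fin 3)) = cs.wordProd [1] by exact (cs.wordProd_cons 1 []).symm]; simp
    · rw [show cs.simple 1 * cs.wordProd [1] = cs.wordProd ([] : List (Fin 3)) by rw [cs.wordProd_cons, cs.simple_mul_simple_cancel_left]]; simp
    · rw [show cs.simple 1 * cs.wordProd [2] = cs.wordProd [1,2] by exact (cs.wordProd_cons 1 [2]).symm]; simp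
    · rw [show cs.simple 1 * cs.wordProd [1,2] = cs.wordProd [2] by rw [cs.wordProd_cons, cs.simple_mul_simple_cancel_left]]; simp
    · rw [show cs.simple 1 * cs.wordProd [2,1] = cs.wordProd [1,2,1] by exact (cs.wordProd_cons 1 [2,1]).symm]; simp
    · rw [show cs.simple 1 * cs.wordProd [1,2,1] = cs.wordProd [2,1] by rw [cs.wordProd_cons, cs.simple_mul_simple_cancel_left]]; simp
    · rw [show cs.simple 1 * cs.wordProd [2,1,2] = cs.wordProd [1,2,1,2] by exact (cs.wordProd_cons 1 [2,1,2]).symm]; simp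
    · rw [show cs.simple 1 * cs.wordProd [1,2,1,2] = cs.wordProd [2,1,2] by rw [cs.wordProd_cons, cs.simple_mul_simple_cancel_left]]; simp
    · rw [show cs.simple 1 * cs.wordProd [2,1,2,1] = cs.wordProd [1,2,1,2,1] by exact (cs.wordProd_cons 1 [2,1,2,1]).symm]; simp
    · rw [show cs.simple 1 * cs.wordProd [1,2,1,2,1] = cs.wordProd [2,1,2,1] by rw [cs.wordProd_cons, cs.simple_mul_simple_cancel_left]]; simp
    · rw [show cs.simple 1 * cs.wordProd [2,1,2,1,2] = cs.wordProd [1,2,1,2,1,2] by exact (cs.wordProd_cons 1 [2,1,2,1,2]).symm]; simp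
    · rw [show cs.simple 1 * cs.wordProd [1,2,1,2,1,2] = cs.wordProd [2,1,2,1,2] by rw [cs.wordProd_cons, cs.simple_mul_simple_cancel_left]]; simp
  · intro t ht
    simp only [Set.mem_insert_iff, Set.mem_singleton_iff] at ht
    rcases ht with rfl | rfl | rfl | rfl | rfl | rfl | rfl | rfl | rfl | rfl | rfl | rfl
    · rw [show cs.simple 2 * cs.wordProd ([] : List (Fin 3)) = cs.wordProd [2] by exact (cs.wordProd_cons 2 []).symm]; simp
    · rw [show cs.simple 2 * cs.wordProd [1] = cs.wordProd [2,1] by exact (cs.wordProd_cons 2 [1]).symm]; simp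
    · rw [show cs.simple 2 * cs.wordProd [2] = cs.wordProd ([] : List (Fin 3)) by rw [cs.wordProd_cons, cs.simple_mul_simple_cancel_left]]; simp
    · rw [show cs.simple 2 * cs.wordProd [1,2] = cs.wordProd [2,1,2] by exact (cs.wordProd_cons 2 [1,2]).symm]; simp
    · rw [show cs.simple 2 * cs.wordProd [2,1] = cs.wordProd [1] by rw [cs.wordProd_cons, cs.simple_mul_simple_cancel_left]]; simp
    · rw [show cs.simple 2 * cs.wordProd [1,2,1] = cs.wordProd [2,1,2,1] by exact (cs.wordProd_cons 2 [1,2,1]).symm]; simp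
    · rw [show cs.simple 2 * cs.wordProd [2,1,2] = cs.wordProd [1,2] by rw [cs.wordProd_cons, cs.simple_mul_simple_cancel_left]]; simp
    · rw [show cs.simple 2 * cs.wordProd [1,2,1,2] = cs.wordProd [2,1,2,1,2] by exact (cs.wordProd_cons 2 [1,2,1,2]).symm]; simp
    · rw [show cs.simple 2 * cs.wordProd [2,1,2,1] = cs.wordProd [1,2,1] by rw [cs.wordProd_cons, cs.simple_mul_simple_cancel_left]]; simp
    · rw [show cs.simple 2 * cs.wordProd [1,2,1,2,1] = cs.wordProd [1,2,1,2,1,2] by rw [← cs.wordProd_cons 2 [1,2,1,2,1], ← htop12 cs h01 h12 h02]]; simp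
    · rw [show cs.simple 2 * cs.wordProd [2,1,2,1,2] = cs.wordProd [1,2,1,2] by rw [cs.wordProd_cons, cs.simple_mul_simple_cancel_left]]; simp
    · rw [show cs.simple 2 * cs.wordProd [1,2,1,2,1,2] = cs.wordProd [1,2,1,2,1] by rw [htop12 cs h01 h12 h02, cs.wordProd_cons, cs.simple_mul_simple_cancel_left]]; simp
  · intro t ht
    simp only [Set.mem_insert_iff, Set.mem_singleton_iff] at ht
    rcases ht with rfl | rfl | rfl | rfl | rfl | rfl | rfl | rfl | rfl | rfl | rfl | rfl <;> exact word_mem cs 1 2 _ (by decide)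

include h01 h12 h02 in
theorem pfin12 : (parabolic cs ({1,2} : Finset (Fin 3)) : Set W).Finite := by
  rw [pset12 cs h01 h12 h02]
  exact ((((((((((((Set.finite_singleton _).insert _).insert _).insert _).insert _).insert _).insert _).insert _).insert _).insert _).insert _).insert _)

include h01 h12 h02 in
theorem poin12 : poin cs ({1,2} : Finset (Fin 3)) = ((1+X) * (1+X+X^2+X^3+X^4+X^5) : ℚ[X]) := by
  classical
  have hfin := pfin12 cs h01 h12 h02
  have hne12_0_1 : (1 : W) ≠ cs.simple 1 := by have h' := wne cs h01 h12 h02 (ω := []) (ω' := [1]) (by decide); simpa using h'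
  have hne12_0_2 : (1 : W) ≠ cs.simple 2 := by have h' := wne cs h01 h12 h02 (ω := []) (ω' := [2]) (by decide); simpa using h'
  have hne12_0_3 : (1 : W) ≠ cs.wordProd [1,2] := by have h' := wne cs h01 h12 h02 (ω := []) (ω' := [1,2]) (by decide); simpa using h'
  have hne12_0_4 : (1 : W) ≠ cs.wordProd [2,1] := by have h' := wne cs h01 h12 h02 (ω := []) (ω' := [2,1]) (by decide); simpa using h'
  have hne12_0_5 : (1 : W) ≠ cs.wordProd [1,2,1] := by have h' := wne cs h01 h12 h02 (ω := []) (ω' := [1,2,1]) (by decide); simpa using h'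
  have hne12_0_6 : (1 : W) ≠ cs.wordProd [2,1,2] := by have h' := wne cs h01 h12 h02 (ω := []) (ω' := [2,1,2]) (by decide); simpa using h'
  have hne12_0_7 : (1 : W) ≠ cs.wordProd [1,2,1,2] := by have h' := wne cs h01 h12 h02 (ω := []) (ω' := [1,2,1,2]) (by decide); simpa using h'
  have hne12_0_8 : (1 : W) ≠ cs.wordProd [2,1,2,1] := by have h' := wne cs h01 h12 h02 (ω := []) (ω' := [2,1,2,1]) (by decide); simpa using h'
  have hne12_0_9 : (1 : W) ≠ cs.wordProd [1,2,1,2,1] := by have h' := wne cs h01 h12 h02 (ω := []) (ω' := [1,2,1,2,1]) (by decide); simpa using h'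
  have hne12_0_10 : (1 : W) ≠ cs.wordProd [2,1,2,1,2] := by have h' := wne cs h01 h12 h02 (ω := []) (ω' := [2,1,2,1,2]) (by decide); simpa using h'
  have hne12_0_11 : (1 : W) ≠ cs.wordProd [1,2,1,2,1,2] := by have h' := wne cs h01 h12 h02 (ω := []) (ω' := [1,2,1,2,1,2]) (by decide); simpa using h'
  have hne12_1_2 : cs.simple 1 ≠ cs.simple 2 := by have h' := wne cs h01 h12 h02 (ω := [1]) (ω' := [2]) (by decide); simpa using h'
  have hne12_1_3 : cs.simple 1 ≠ cs.wordProd [1,2] := by have h' := wne cs h01 h12 h02 (ω := [1]) (ω' := [1,2]) (by decide); simpa using h'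
  have hne12_1_4 : cs.simple 1 ≠ cs.wordProd [2,1] := by have h' := wne cs h01 h12 h02 (ω := [1]) (ω' := [2,1]) (by decide); simpa using h'
  have hne12_1_5 : cs.simple 1 ≠ cs.wordProd [1,2,1] := by have h' := wne cs h01 h12 h02 (ω := [1]) (ω' := [1,2,1]) (by decide); simpa using h'
  have hne12_1_6 : cs.simple 1 ≠ cs.wordProd [2,1,2] := by have h' := wne cs h01 h12 h02 (ω := [1]) (ω' := [2,1,2]) (by decide); simpa using h'
  have hne12_1_7 : cs.simple 1 ≠ cs.wordProd [1,2,1,2] := by have h' := wne cs h01 h12 h02 (ω := [1]) (ω' := [1,2,1,2]) (by decide); simpa using h'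
  have hne12_1_8 : cs.simple 1 ≠ cs.wordProd [2,1,2,1] := by have h' := wne cs h01 h12 h02 (ω := [1]) (ω' := [2,1,2,1]) (by decide); simpa using h'
  have hne12_1_9 : cs.simple 1 ≠ cs.wordProd [1,2,1,2,1] := by have h' := wne cs h01 h12 h02 (ω := [1]) (ω' := [1,2,1,2,1]) (by decide); simpa using h'
  have hne12_1_10 : cs.simple 1 ≠ cs.wordProd [2,1,2,1,2] := by have h' := wne cs h01 h12 h02 (ω := [1]) (ω' := [2,1,2,1,2]) (by decide); simpa using h'
  have hne12_1_11 : cs.simple 1 ≠ cs.wordProd [1,2,1,2,1,2] := by have h' := wne cs h01 h12 h02 (ω := [1]) (ω' := [1,2,1,2,1,2]) (by decide); simpa using h'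
  have hne12_2_3 : cs.simple 2 ≠ cs.wordProd [1,2] := by have h' := wne cs h01 h12 h02 (ω := [2]) (ω' := [1,2]) (by decide); simpa using h'
  have hne12_2_4 : cs.simple 2 ≠ cs.wordProd [2,1] := by have h' := wne cs h01 h12 h02 (ω := [2]) (ω' := [2,1]) (by decide); simpa using h'
  have hne12_2_5 : cs.simple 2 ≠ cs.wordProd [1,2,1] := by have h' := wne cs h01 h12 h02 (ω := [2]) (ω' := [1,2,1]) (by decide); simpa using h'
  have hne12_2_6 : cs.simple 2 ≠ cs.wordProd [2,1,2] := by have h' := wne cs h01 h12 h02 (ω := [2]) (ω' := [2,1,2]) (by decide); simpa using h'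
  have hne12_2_7 : cs.simple 2 ≠ cs.wordProd [1,2,1,2] := by have h' := wne cs h01 h12 h02 (ω := [2]) (ω' := [1,2,1,2]) (by decide); simpa using h'
  have hne12_2_8 : cs.simple 2 ≠ cs.wordProd [2,1,2,1] := by have h' := wne cs h01 h12 h02 (ω := [2]) (ω' := [2,1,2,1]) (by decide); simpa using h'
  have hne12_2_9 : cs.simple 2 ≠ cs.wordProd [1,2,1,2,1] := by have h' := wne cs h01 h12 h02 (ω := [2]) (ω' := [1,2,1,2,1]) (by decide); simpa using h'
  have hne12_2_10 : cs.simple 2 ≠ cs.wordProd [2,1,2,1,2] := by have h' := wne cs h01 h12 h02 (ω := [2]) (ω' := [2,1,2,1,2]) (by decide); simpa using h'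
  have hne12_2_11 : cs.simple 2 ≠ cs.wordProd [1,2,1,2,1,2] := by have h' := wne cs h01 h12 h02 (ω := [2]) (ω' := [1,2,1,2,1,2]) (by decide); simpa using h'
  have hne12_3_4 : cs.wordProd [1,2] ≠ cs.wordProd [2,1] := by have h' := wne cs h01 h12 h02 (ω := [1,2]) (ω' := [2,1]) (by decide); simpa using h'
  have hne12_3_5 : cs.wordProd [1,2] ≠ cs.wordProd [1,2,1] := by have h' := wne cs h01 h12 h02 (ω := [1,2]) (ω' := [1,2,1]) (by decide); simpa using h'
  have hne12_3_6 : cs.wordProd [1,2] ≠ cs.wordProd [2,1,2] := by have h' := wne cs h01 h12 h02 (ω := [1,2]) (ω' := [2,1,2]) (by decide); simpa using h'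
  have hne12_3_7 : cs.wordProd [1,2] ≠ cs.wordProd [1,2,1,2] := by have h' := wne cs h01 h12 h02 (ω := [1,2]) (ω' := [1,2,1,2]) (by decide); simpa using h'
  have hne12_3_8 : cs.wordProd [1,2] ≠ cs.wordProd [2,1,2,1] := by have h' := wne cs h01 h12 h02 (ω := [1,2]) (ω' := [2,1,2,1]) (by decide); simpa using h'
  have hne12_3_9 : cs.wordProd [1,2] ≠ cs.wordProd [1,2,1,2,1] := by have h' := wne cs h01 h12 h02 (ω := [1,2]) (ω' := [1,2,1,2,1]) (by decide); simpa using h'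
  have hne12_3_10 : cs.wordProd [1,2] ≠ cs.wordProd [2,1,2,1,2] := by have h' := wne cs h01 h12 h02 (ω := [1,2]) (ω' := [2,1,2,1,2]) (by decide); simpa using h'
  have hne12_3_11 : cs.wordProd [1,2] ≠ cs.wordProd [1,2,1,2,1,2] := by have h' := wne cs h01 h12 h02 (ω := [1,2]) (ω' := [1,2,1,2,1,2]) (by decide); simpa using h'
  have hne12_4_5 : cs.wordProd [2,1] ≠ cs.wordProd [1,2,1] := by have h' := wne cs h01 h12 h02 (ω := [2,1]) (ω' := [1,2,1]) (by decide); simpa using h'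
  have hne12_4_6 : cs.wordProd [2,1] ≠ cs.wordProd [2,1,2] := by have h' := wne cs h01 h12 h02 (ω := [2,1]) (ω' := [2,1,2]) (by decide); simpa using h'
  have hne12_4_7 : cs.wordProd [2,1] ≠ cs.wordProd [1,2,1,2] := by have h' := wne cs h01 h12 h02 (ω := [2,1]) (ω' := [1,2,1,2]) (by decide); simpa using h'
  have hne12_4_8 : cs.wordProd [2,1] ≠ cs.wordProd [2,1,2,1] := by have h' := wne cs h01 h12 h02 (ω := [2,1]) (ω' := [2,1,2,1]) (by decide); simpa using h'
  have hne12_4_9 : cs.wordProd [2,1] ≠ cs.wordProd [1,2,1,2,1] := by have h' := wne cs h01 h12 h02 (ω := [2,1]) (ω' := [1,2,1,2,1]) (by decide); simpa using h'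
  have hne12_4_10 : cs.wordProd [2,1] ≠ cs.wordProd [2,1,2,1,2] := by have h' := wne cs h01 h12 h02 (ω := [2,1]) (ω' := [2,1,2,1,2]) (by decide); simpa using h'
  have hne12_4_11 : cs.wordProd [2,1] ≠ cs.wordProd [1,2,1,2,1,2] := by have h' := wne cs h01 h12 h02 (ω := [2,1]) (ω' := [1,2,1,2,1,2]) (by decide); simpa using h'
  have hne12_5_6 : cs.wordProd [1,2,1] ≠ cs.wordProd [2,1,2] := by have h' := wne cs h01 h12 h02 (ω := [1,2,1]) (ω' := [2,1,2]) (by decide); simpa using h'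
  have hne12_5_7 : cs.wordProd [1,2,1] ≠ cs.wordProd [1,2,1,2] := by have h' := wne cs h01 h12 h02 (ω := [1,2,1]) (ω' := [1,2,1,2]) (by decide); simpa using h'
  have hne12_5_8 : cs.wordProd [1,2,1] ≠ cs.wordProd [2,1,2,1] := by have h' := wne cs h01 h12 h02 (ω := [1,2,1]) (ω' := [2,1,2,1]) (by decide); simpa using h'
  have hne12_5_9 : cs.wordProd [1,2,1] ≠ cs.wordProd [1,2,1,2,1] := by have h' := wne cs h01 h12 h02 (ω := [1,2,1]) (ω' := [1,2,1,2,1]) (by decide); simpa using h'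
  have hne12_5_10 : cs.wordProd [1,2,1] ≠ cs.wordProd [2,1,2,1,2] := by have h' := wne cs h01 h12 h02 (ω := [1,2,1]) (ω' := [2,1,2,1,2]) (by decide); simpa using h'
  have hne12_5_11 : cs.wordProd [1,2,1] ≠ cs.wordProd [1,2,1,2,1,2] := by have h' := wne cs h01 h12 h02 (ω := [1,2,1]) (ω' := [1,2,1,2,1,2]) (by decide); simpa using h'
  have hne12_6_7 : cs.wordProd [2,1,2] ≠ cs.wordProd [1,2,1,2] := by have h' := wne cs h01 h12 h02 (ω := [2,1,2]) (ω' := [1,2,1,2]) (by decide); simpa using h'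
  have hne12_6_8 : cs.wordProd [2,1,2] ≠ cs.wordProd [2,1,2,1] := by have h' := wne cs h01 h12 h02 (ω := [2,1,2]) (ω' := [2,1,2,1]) (by decide); simpa using h'
  have hne12_6_9 : cs.wordProd [2,1,2] ≠ cs.wordProd [1,2,1,2,1] := by have h' := wne cs h01 h12 h02 (ω := [2,1,2]) (ω' := [1,2,1,2,1]) (by decide); simpa using h'
  have hne12_6_10 : cs.wordProd [2,1,2] ≠ cs.wordProd [2,1,2,1,2] := by have h' := wne cs h01 h12 h02 (ω := [2,1,2]) (ω' := [2,1,2,1,2]) (by decide); simpa using h'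
  have hne12_6_11 : cs.wordProd [2,1,2] ≠ cs.wordProd [1,2,1,2,1,2] := by have h' := wne cs h01 h12 h02 (ω := [2,1,2]) (ω' := [1,2,1,2,1,2]) (by decide); simpa using h'
  have hne12_7_8 : cs.wordProd [1,2,1,2] ≠ cs.wordProd [2,1,2,1] := by have h' := wne cs h01 h12 h02 (ω := [1,2,1,2]) (ω' := [2,1,2,1]) (by decide); simpa using h'
  have hne12_7_9 : cs.wordProd [1,2,1,2] ≠ cs.wordProd [1,2,1,2,1] := by have h' := wne cs h01 h12 h02 (ω := [1,2,1,2]) (ω' := [1,2,1,2,1]) (by decide); simpa using h'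
  have hne12_7_10 : cs.wordProd [1,2,1,2] ≠ cs.wordProd [2,1,2,1,2] := by have h' := wne cs h01 h12 h02 (ω := [1,2,1,2]) (ω' := [2,1,2,1,2]) (by decide); simpa using h'
  have hne12_7_11 : cs.wordProd [1,2,1,2] ≠ cs.wordProd [1,2,1,2,1,2] := by have h' := wne cs h01 h12 h02 (ω := [1,2,1,2]) (ω' := [1,2,1,2,1,2]) (by decide); simpa using h'
  have hne12_8_9 : cs.wordProd [2,1,2,1] ≠ cs.wordProd [1,2,1,2,1] := by have h' := wne cs h01 h12 h02 (ω := [2,1,2,1]) (ω' := [1,2,1,2,1]) (by decide); simpa using h'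
  have hne12_8_10 : cs.wordProd [2,1,2,1] ≠ cs.wordProd [2,1,2,1,2] := by have h' := wne cs h01 h12 h02 (ω := [2,1,2,1]) (ω' := [2,1,2,1,2]) (by decide); simpa using h'
  have hne12_8_11 : cs.wordProd [2,1,2,1] ≠ cs.wordProd [1,2,1,2,1,2] := by have h' := wne cs h01 h12 h02 (ω := [2,1,2,1]) (ω' := [1,2,1,2,1,2]) (by decide); simpa using h'
  have hne12_9_10 : cs.wordProd [1,2,1,2,1] ≠ cs.wordProd [2,1,2,1,2] := by have h' := wne cs h01 h12 h02 (ω := [1,2,1,2,1]) (ω' := [2,1,2,1,2]) (by decide); simpa using h'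
  have hne12_9_11 : cs.wordProd [1,2,1,2,1] ≠ cs.wordProd [1,2,1,2,1,2] := by have h' := wne cs h01 h12 h02 (ω := [1,2,1,2,1]) (ω' := [1,2,1,2,1,2]) (by decide); simpa using h'
  have hne12_10_11 : cs.wordProd [2,1,2,1,2] ≠ cs.wordProd [1,2,1,2,1,2] := by have h' := wne cs h01 h12 h02 (ω := [2,1,2,1,2]) (ω' := [1,2,1,2,1,2]) (by decide); simpa using h'
  simp only [poin]
  rw [dif_pos hfin]
  have hts : hfin.toFinset = ({cs.wordProd ([] : List (Fin 3)), cs.wordProd [1], cs.wordProd [2], cs.wordProd [1,2], cs.wordProd [2,1], cs.wordProd [1,2,1], cs.wordProd [2,1,2], cs.wordProd [1,2,1,2], cs.wordProd [2,1,2,1], cs.wordProd [1,2,1,2,1], cs.wordProd [2,1,2,1,2], cs.wordProd [1,2,1,2,1,2]} : Finset W) := by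
    ext w
    simp only [Set.Finite.mem_toFinset, pset12 cs h01 h12 h02, Set.mem_insert_iff,
      Set.mem_singleton_iff, Finset.mem_insert, Finset.mem_singleton]
  rw [hts]
  rw [Finset.sum_insert (by simp [hne12_0_1, hne12_0_2, hne12_0_3, hne12_0_4, hne12_0_5, hne12_0_6, hne12_0_7, hne12_0_8, hne12_0_9, hne12_0_10, hne12_0_11])]
  rw [Finset.sum_insert (by simp [hne12_1_2, hne12_1_3, hne12_1_4, hne12_1_5, hne12_1_6, hne12_1_7, hne12_1_8, hne12_1_9, hne12_1_10, hne12_1_11])]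
  rw [Finset.sum_insert (by simp [hne12_2_3, hne12_2_4, hne12_2_5, hne12_2_6, hne12_2_7, hne12_2_8, hne12_2_9, hne12_2_10, hne12_2_11])]
  rw [Finset.sum_insert (by simp [hne12_3_4, hne12_3_5, hne12_3_6, hne12_3_7, hne12_3_8, hne12_3_9, hne12_3_10, hne12_3_11])]
  rw [Finset.sum_insert (by simp [hne12_4_5, hne12_4_6, hne12_4_7, hne12_4_8, hne12_4_9, hne12_4_10, hne12_4_11])]
  rw [Finset.sum_insert (by simp [hne12_5_6, hne12_5_7, hne12_5_8, hne12_5_9, hne12_5_10, hne12_5_11])]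
  rw [Finset.sum_insert (by simp [hne12_6_7, hne12_6_8, hne12_6_9, hne12_6_10, hne12_6_11])]
  rw [Finset.sum_insert (by simp [hne12_7_8, hne12_7_9, hne12_7_10, hne12_7_11])]
  rw [Finset.sum_insert (by simp [hne12_8_9, hne12_8_10, hne12_8_11])]
  rw [Finset.sum_insert (by simp [hne12_9_10, hne12_9_11])]
  rw [Finset.sum_insert (by simp [hne12_10_11])]
  rw [Finset.sum_singleton]
  rw [len_nil cs h01 h12 h02, len_1 cs h01 h12 h02, len_2 cs h01 h12 h02, len_12 cs h01 h12 h02, len_21 cs h01 h12 h02, len_121 cs h01 h12 h02, len_212 cs h01 h12 h02, len_1212 cs h01 h12 h02, len_2121 cs h01 h12 h02, len_12121 cs h01 h12 h02, len_21212 cs h01 h12 h02, len_121212 cs h01 h12 h02]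
  ring

include h01 h12 h02 in
theorem pset01 : (parabolic cs ({0,1} : Finset (Fin 3)) : Set W) =
    {cs.wordProd ([] : List (Fin 3)), cs.wordProd [0], cs.wordProd [1], cs.wordProd [0,1], cs.wordProd [1,0], cs.wordProd [0,1,0]} := by
  have himg : cs.simple '' ↑({0,1} : Finset (Fin 3)) = {cs.simple 0, cs.simple 1} := by
    rw [Finset.coe_insert, Finset.coe_singleton, Set.image_insert_eq, Set.image_singleton]
  rw [parabolic, himg]
  refine pair_closure _ _ (cs.simple_mul_simple_self 0) (cs.simple_mul_simple_self 1) _ ?_ ?_ ?_ ?_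
  · rw [← cs.wordProd_nil]; simp
  · intro t ht
    simp only [Set.mem_insert_iff, Set.mem_singleton_iff] at ht
    rcases ht with rfl | rfl | rfl | rfl | rfl | rfl
    · rw [show cs.simple 0 * cs.wordProd ([] : List (Fin 3)) = cs.wordProd [0] by exact (cs.wordProd_cons 0 []).symm]; simp
    · rw [show cs.simple 0 * cs.wordProd [0] = cs.wordProd ([] : List (Fin 3)) by rw [cs.wordProd_cons, cs.simple_mul_simple_cancel_left]]; simp
    · rw [show cs.simple 0 * cs.wordProd [1] = cs.wordProd [0,1] by exact (cs.wordProd_cons 0 [1]).symm]; simp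
    · rw [show cs.simple 0 * cs.wordProd [0,1] = cs.wordProd [1] by rw [cs.wordProd_cons, cs.simple_mul_simple_cancel_left]]; simp
    · rw [show cs.simple 0 * cs.wordProd [1,0] = cs.wordProd [0,1,0] by exact (cs.wordProd_cons 0 [1,0]).symm]; simp
    · rw [show cs.simple 0 * cs.wordProd [0,1,0] = cs.wordProd [1,0] by rw [cs.wordProd_cons, cs.simple_mul_simple_cancel_left]]; simp
  · intro t ht
    simp only [Set.mem_insert_iff, Set.mem_singleton_iff] at ht
    rcases ht with rfl | rfl | rfl | rfl | rfl | rfl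
    · rw [show cs.simple 1 * cs.wordProd ([] : List (Fin 3)) = cs.wordProd [1] by exact (cs.wordProd_cons 1 []).symm]; simp
    · rw [show cs.simple 1 * cs.wordProd [0] = cs.wordProd [1,0] by exact (cs.wordProd_cons 1 [0]).symm]; simp
    · rw [show cs.simple 1 * cs.wordProd [1] = cs.wordProd ([] : List (Fin 3)) by rw [cs.wordProd_cons, cs.simple_mul_simple_cancel_left]]; simp
    · rw [show cs.simple 1 * cs.wordProd [0,1] = cs.wordProd [0,1,0] by rw [← cs.wordProd_cons 1 [0,1], htop01 cs h01 h12 h02]]; simp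
    · rw [show cs.simple 1 * cs.wordProd [1,0] = cs.wordProd [0] by rw [cs.wordProd_cons, cs.simple_mul_simple_cancel_left]]; simp
    · rw [show cs.simple 1 * cs.wordProd [0,1,0] = cs.wordProd [0,1] by rw [← htop01 cs h01 h12 h02, cs.wordProd_cons, cs.simple_mul_simple_cancel_left]]; simp
  · intro t ht
    simp only [Set.mem_insert_iff, Set.mem_singleton_iff] at ht
    rcases ht with rfl | rfl | rfl | rfl | rfl | rfl <;> exact word_mem cs 0 1 _ (by decide)

include h01 h12 h02 in
theorem pfin01 : (parabolic cs ({0,1} : Finset (Fin 3)) : Set W).Finite := by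
  rw [pset01 cs h01 h12 h02]
  exact ((((((Set.finite_singleton _).insert _).insert _).insert _).insert _).insert _)

include h01 h12 h02 in
theorem poin01 : poin cs ({0,1} : Finset (Fin 3)) = ((1+X) * (1+X+X^2) : ℚ[X]) := by
  classical
  have hfin := pfin01 cs h01 h12 h02
  have hne01_0_1 : (1 : W) ≠ cs.simple 0 := by have h' := wne cs h01 h12 h02 (ω := []) (ω' := [0]) (by decide); simpa using h'
  have hne01_0_2 : (1 : W) ≠ cs.simple 1 := by have h' := wne cs h01 h12 h02 (ω := []) (ω' := [1]) (by decide); simpa using h'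
  have hne01_0_3 : (1 : W) ≠ cs.wordProd [0,1] := by have h' := wne cs h01 h12 h02 (ω := []) (ω' := [0,1]) (by decide); simpa using h'
  have hne01_0_4 : (1 : W) ≠ cs.wordProd [1,0] := by have h' := wne cs h01 h12 h02 (ω := []) (ω' := [1,0]) (by decide); simpa using h'
  have hne01_0_5 : (1 : W) ≠ cs.wordProd [0,1,0] := by have h' := wne cs h01 h12 h02 (ω := []) (ω' := [0,1,0]) (by decide); simpa using h'
  have hne01_1_2 : cs.simple 0 ≠ cs.simple 1 := by have h' := wne cs h01 h12 h02 (ω := [0]) (ω' := [1]) (by decide); simpa using h'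
  have hne01_1_3 : cs.simple 0 ≠ cs.wordProd [0,1] := by have h' := wne cs h01 h12 h02 (ω := [0]) (ω' := [0,1]) (by decide); simpa using h'
  have hne01_1_4 : cs.simple 0 ≠ cs.wordProd [1,0] := by have h' := wne cs h01 h12 h02 (ω := [0]) (ω' := [1,0]) (by decide); simpa using h'
  have hne01_1_5 : cs.simple 0 ≠ cs.wordProd [0,1,0] := by have h' := wne cs h01 h12 h02 (ω := [0]) (ω' := [0,1,0]) (by decide); simpa using h'
  have hne01_2_3 : cs.simple 1 ≠ cs.wordProd [0,1] := by have h' := wne cs h01 h12 h02 (ω := [1]) (ω' := [0,1]) (by decide); simpa using h'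
  have hne01_2_4 : cs.simple 1 ≠ cs.wordProd [1,0] := by have h' := wne cs h01 h12 h02 (ω := [1]) (ω' := [1,0]) (by decide); simpa using h'
  have hne01_2_5 : cs.simple 1 ≠ cs.wordProd [0,1,0] := by have h' := wne cs h01 h12 h02 (ω := [1]) (ω' := [0,1,0]) (by decide); simpa using h'
  have hne01_3_4 : cs.wordProd [0,1] ≠ cs.wordProd [1,0] := by have h' := wne cs h01 h12 h02 (ω := [0,1]) (ω' := [1,0]) (by decide); simpa using h'
  have hne01_3_5 : cs.wordProd [0,1] ≠ cs.wordProd [0,1,0] := by have h' := wne cs h01 h12 h02 (ω := [0,1]) (ω' := [0,1,0]) (by decide); simpa using h'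
  have hne01_4_5 : cs.wordProd [1,0] ≠ cs.wordProd [0,1,0] := by have h' := wne cs h01 h12 h02 (ω := [1,0]) (ω' := [0,1,0]) (by decide); simpa using h'
  simp only [poin]
  rw [dif_pos hfin]
  have hts : hfin.toFinset = ({cs.wordProd ([] : List (Fin 3)), cs.wordProd [0], cs.wordProd [1], cs.wordProd [0,1], cs.wordProd [1,0], cs.wordProd [0,1,0]} : Finset W) := by
    ext w
    simp only [Set.Finite.mem_toFinset, pset01 cs h01 h12 h02, Set.mem_insert_iff,
      Set.mem_singleton_iff, Finset.mem_insert, Finset.mem_singleton]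
  rw [hts]
  rw [Finset.sum_insert (by simp [hne01_0_1, hne01_0_2, hne01_0_3, hne01_0_4, hne01_0_5])]
  rw [Finset.sum_insert (by simp [hne01_1_2, hne01_1_3, hne01_1_4, hne01_1_5])]
  rw [Finset.sum_insert (by simp [hne01_2_3, hne01_2_4, hne01_2_5])]
  rw [Finset.sum_insert (by simp [hne01_3_4, hne01_3_5])]
  rw [Finset.sum_insert (by simp [hne01_4_5])]
  rw [Finset.sum_singleton]
  rw [len_nil cs h01 h12 h02, len_0 cs h01 h12 h02, len_1 cs h01 h12 h02, len_01 cs h01 h12 h02, len_10 cs h01 h12 h02, len_010 cs h01 h12 h02]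
  ring

include h01 h12 h02 in
theorem pset02 : (parabolic cs ({0,2} : Finset (Fin 3)) : Set W) =
    {cs.wordProd ([] : List (Fin 3)), cs.wordProd [0], cs.wordProd [2], cs.wordProd [0,2]} := by
  have himg : cs.simple '' ↑({0,2} : Finset (Fin 3)) = {cs.simple 0, cs.simple 2} := by
    rw [Finset.coe_insert, Finset.coe_singleton, Set.image_insert_eq, Set.image_singleton]
  rw [parabolic, himg]
  refine pair_closure _ _ (cs.simple_mul_simple_self 0) (cs.simple_mul_simple_self 2) _ ?_ ?_ ?_ ?_
  · rw [← cs.wordProd_nil]; simp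
  · intro t ht
    simp only [Set.mem_insert_iff, Set.mem_singleton_iff] at ht
    rcases ht with rfl | rfl | rfl | rfl
    · rw [show cs.simple 0 * cs.wordProd ([] : List (Fin 3)) = cs.wordProd [0] by exact (cs.wordProd_cons 0 []).symm]; simp
    · rw [show cs.simple 0 * cs.wordProd [0] = cs.wordProd ([] : List (Fin 3)) by rw [cs.wordProd_cons, cs.simple_mul_simple_cancel_left]]; simp
    · rw [show cs.simple 0 * cs.wordProd [2] = cs.wordProd [0,2] by exact (cs.wordProd_cons 0 [2]).symm]; simp
    · rw [show cs.simple 0 * cs.wordProd [0,2] = cs.wordProd [2] by rw [cs.wordProd_cons, cs.simple_mul_simple_cancel_left]]; simp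
  · intro t ht
    simp only [Set.mem_insert_iff, Set.mem_singleton_iff] at ht
    rcases ht with rfl | rfl | rfl | rfl
    · rw [show cs.simple 2 * cs.wordProd ([] : List (Fin 3)) = cs.wordProd [2] by exact (cs.wordProd_cons 2 []).symm]; simp
    · rw [show cs.simple 2 * cs.wordProd [0] = cs.wordProd [0,2] by rw [← cs.wordProd_cons 2 [0], ← htop02 cs h01 h12 h02]]; simp
    · rw [show cs.simple 2 * cs.wordProd [2] = cs.wordProd ([] : List (Fin 3)) by rw [cs.wordProd_cons, cs.simple_mul_simple_cancel_left]]; simp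
    · rw [show cs.simple 2 * cs.wordProd [0,2] = cs.wordProd [0] by rw [htop02 cs h01 h12 h02, cs.wordProd_cons, cs.simple_mul_simple_cancel_left]]; simp
  · intro t ht
    simp only [Set.mem_insert_iff, Set.mem_singleton_iff] at ht
    rcases ht with rfl | rfl | rfl | rfl <;> exact word_mem cs 0 2 _ (by decide)

include h01 h12 h02 in
theorem pfin02 : (parabolic cs ({0,2} : Finset (Fin 3)) : Set W).Finite := by
  rw [pset02 cs h01 h12 h02]
  exact ((((Set.finite_singleton _).insert _).insert _).insert _)

include h01 h12 h02 in
theorem poin02 : poin cs ({0,2} : Finset (Fin 3)) = ((1+X) * (1+X) : ℚ[X]) := by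
  classical
  have hfin := pfin02 cs h01 h12 h02
  have hne02_0_1 : (1 : W) ≠ cs.simple 0 := by have h' := wne cs h01 h12 h02 (ω := []) (ω' := [0]) (by decide); simpa using h'
  have hne02_0_2 : (1 : W) ≠ cs.simple 2 := by have h' := wne cs h01 h12 h02 (ω := []) (ω' := [2]) (by decide); simpa using h'
  have hne02_0_3 : (1 : W) ≠ cs.wordProd [0,2] := by have h' := wne cs h01 h12 h02 (ω := []) (ω' := [0,2]) (by decide); simpa using h'
  have hne02_1_2 : cs.simple 0 ≠ cs.simple 2 := by have h' := wne cs h01 h12 h02 (ω := [0]) (ω' := [2]) (by decide); simpa using h'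
  have hne02_1_3 : cs.simple 0 ≠ cs.wordProd [0,2] := by have h' := wne cs h01 h12 h02 (ω := [0]) (ω' := [0,2]) (by decide); simpa using h'
  have hne02_2_3 : cs.simple 2 ≠ cs.wordProd [0,2] := by have h' := wne cs h01 h12 h02 (ω := [2]) (ω' := [0,2]) (by decide); simpa using h'
  simp only [poin]
  rw [dif_pos hfin]
  have hts : hfin.toFinset = ({cs.wordProd ([] : List (Fin 3)), cs.wordProd [0], cs.wordProd [2], cs.wordProd [0,2]} : Finset W) := by
    ext w
    simp only [Set.Finite.mem_toFinset, pset02 cs h01 h12 h02, Set.mem_insert_iff,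
      Set.mem_singleton_iff, Finset.mem_insert, Finset.mem_singleton]
  rw [hts]
  rw [Finset.sum_insert (by simp [hne02_0_1, hne02_0_2, hne02_0_3])]
  rw [Finset.sum_insert (by simp [hne02_1_2, hne02_1_3])]
  rw [Finset.sum_insert (by simp [hne02_2_3])]
  rw [Finset.sum_singleton]
  rw [len_nil cs h01 h12 h02, len_0 cs h01 h12 h02, len_2 cs h01 h12 h02, len_02 cs h01 h12 h02]
  ring

theorem single_closure (x : W) (hx : x * x = 1) :
    (Subgroup.closure {x} : Set W) = {1, x} := by
  refine Set.Subset.antisymm (fun w hw => ?_) ?_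
  · have hxi : x⁻¹ = x := inv_eq_of_mul_eq_one_right hx
    have hS : ({x} : Set W) ∪ ({x} : Set W)⁻¹ = {x} := by
      rw [Set.inv_singleton, hxi, Set.union_self]
    have h2 := Subgroup.closure_toSubmonoid ({x} : Set W)
    rw [hS] at h2
    have hw' : w ∈ Submonoid.closure ({x} : Set W) := by rw [← h2]; exact hw
    refine Submonoid.closure_induction_left (motive := fun t _ => t ∈ ({1, x} : Set W))
      (by left; rfl) ?_ hw'
    rintro z hz t _ ht
    rw [Set.mem_singleton_iff] at hz
    subst hz
    rcases ht with rfl | ht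
    · rw [mul_one]; right; rfl
    · rw [Set.mem_singleton_iff] at ht
      subst ht
      rw [hx]; left; rfl
  · rintro t (rfl | ht)
    · exact one_mem _
    · rw [Set.mem_singleton_iff] at ht
      subst ht
      exact Subgroup.subset_closure rfl

theorem pset_s (i : Fin 3) : (parabolic cs ({i} : Finset (Fin 3)) : Set W) = {1, cs.simple i} := by
  rw [parabolic, Finset.coe_singleton, Set.image_singleton]
  exact single_closure _ (cs.simple_mul_simple_self i)

theorem pfin_s (i : Fin 3) : (parabolic cs ({i} : Finset (Fin 3)) : Set W).Finite := by
  rw [pset_s]; exact (Set.finite_singleton _).insert _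

theorem one_ne_simple (i : Fin 3) : (1 : W) ≠ cs.simple i := fun h => by
  have h1 := cs.length_simple i
  rw [← h, cs.length_one] at h1
  exact zero_ne_one h1

theorem poin_s (i : Fin 3) : poin cs ({i} : Finset (Fin 3)) = 1 + X := by
  classical
  have hfin := pfin_s cs i
  simp only [poin]
  rw [dif_pos hfin]
  have hts : hfin.toFinset = ({1, cs.simple i} : Finset W) := by
    ext w
    simp only [Set.Finite.mem_toFinset, pset_s cs i, Set.mem_insert_iff, Set.mem_singleton_iff,
      Finset.mem_insert, Finset.mem_singleton]
  rw [hts, Finset.sum_insert (by simp [one_ne_simple cs i]), Finset.sum_singleton, cs.length_one,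
    cs.length_simple]
  ring

theorem pset_e : (parabolic cs (∅ : Finset (Fin 3)) : Set W) = {1} := by
  rw [parabolic, Finset.coe_empty, Set.image_empty, Subgroup.closure_empty, Subgroup.coe_bot]

theorem pfin_e : (parabolic cs (∅ : Finset (Fin 3)) : Set W).Finite := by
  rw [pset_e]; exact Set.finite_singleton _

theorem poin_e : poin cs (∅ : Finset (Fin 3)) = 1 := by
  classical
  have hfin := pfin_e cs
  simp only [poin]
  rw [dif_pos hfin]
  have hts : hfin.toFinset = ({1} : Finset W) := by
    ext w
    simp only [Set.Finite.mem_toFinset, pset_e cs, Set.mem_singleton_iff, Finset.mem_singleton]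
  rw [hts, Finset.sum_singleton, cs.length_one, pow_zero]

include cs h01 h12 h02 in
theorem w_infinite : Infinite W := by
  have hphit : phi cs h01 h12 h02 (cs.wordProd ([0,1,2,1,2,1] : List (Fin 3)))
      = !![1,0,2;0,1,1;0,0,1] := by
    rw [phi_word]; decide
  have hTn : ∀ n : ℕ, (phi cs h01 h12 h02 (cs.wordProd ([0,1,2,1,2,1] : List (Fin 3)))) ^ n
      = !![1,0,2*(n:ℤ);0,1,(n:ℤ);0,0,1] := by
    intro n
    induction n with
    | zero =>
      rw [pow_zero]
      ext i j
      fin_cases i <;> fin_cases j <;> simp [Matrix.one_apply, Matrix.vecHead, Matrix.vecTail]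
    | succ n ih =>
      rw [pow_succ, ih, hphit]
      ext i j
      fin_cases i <;> fin_cases j <;>
        simp [Matrix.mul_apply, Fin.sum_univ_three, Matrix.vecHead, Matrix.vecTail] <;>
        push_cast <;> ring
  apply Infinite.of_injective (fun n : ℕ => (cs.wordProd ([0,1,2,1,2,1] : List (Fin 3))) ^ n)
  intro m n hmn
  have h2 := congrArg (phi cs h01 h12 h02) hmn
  rw [map_pow, map_pow, hTn, hTn] at h2
  have h3 := congrFun (congrFun h2 0) 2
  simp at h3
  exact_mod_cast h3

include h01 h12 h02 in
theorem kw_empty (k : ℕ) (hk : 3 ≤ k) : IsEmpty (KW cs k) := by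
  constructor
  rintro ⟨σ, hcard, hfin⟩
  have hle : σ.card ≤ 3 := le_trans (Finset.card_le_univ σ) (by simp)
  have hk3 : k = 3 := by omega
  subst hk3
  have hdec : ∀ τ : Finset (Fin 3), τ.card = 3 → τ = Finset.univ := by decide
  have huniv : σ = Finset.univ := hdec σ hcard
  subst huniv
  have hset : (parabolic cs (Finset.univ : Finset (Fin 3)) : Set W) = Set.univ := by
    rw [parabolic, Finset.coe_univ, Set.image_univ, cs.subgroup_closure_range_simple,
      Subgroup.coe_top]
  rw [hset] at hfin
  haveI := w_infinite cs h01 h12 h02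
  exact Set.infinite_univ hfin

def σe : KW cs 0 := ⟨∅, by simp, pfin_e cs⟩
def σs (i : Fin 3) : KW cs 1 := ⟨{i}, by simp, pfin_s cs i⟩

def σ01 : KW cs 2 := ⟨{0,1}, by decide, pfin01 cs h01 h12 h02⟩
def σ02 : KW cs 2 := ⟨{0,2}, by decide, pfin02 cs h01 h12 h02⟩
def σ12 : KW cs 2 := ⟨{1,2}, by decide, pfin12 cs h01 h12 h02⟩

theorem kw0_cases (τ : KW cs 0) : τ = σe cs :=
  Subtype.ext (Finset.card_eq_zero.mp τ.2.1)

theorem kw1_cases (τ : KW cs 1) : τ = σs cs 0 ∨ τ = σs cs 1 ∨ τ = σs cs 2 := by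
  have hdec : ∀ σ : Finset (Fin 3), σ.card = 1 → σ = {0} ∨ σ = {1} ∨ σ = {2} := by decide
  rcases hdec τ.1 τ.2.1 with h | h | h
  · exact Or.inl (Subtype.ext h)
  · exact Or.inr (Or.inl (Subtype.ext h))
  · exact Or.inr (Or.inr (Subtype.ext h))

theorem kw2_cases (τ : KW cs 2) :
    τ = σ01 cs h01 h12 h02 ∨ τ = σ02 cs h01 h12 h02 ∨ τ = σ12 cs h01 h12 h02 := by
  have hdec : ∀ σ : Finset (Fin 3), σ.card = 2 → σ = {0,1} ∨ σ = {0,2} ∨ σ = {1,2} := by decide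
  rcases hdec τ.1 τ.2.1 with h | h | h
  · exact Or.inl (Subtype.ext h)
  · exact Or.inr (Or.inl (Subtype.ext h))
  · exact Or.inr (Or.inr (Subtype.ext h))

theorem ne_s01 : σs cs 0 ≠ σs cs 1 := fun h =>
  (by decide : ({0} : Finset (Fin 3)) ≠ {1}) (congrArg Subtype.val h)
theorem ne_s02 : σs cs 0 ≠ σs cs 2 := fun h =>
  (by decide : ({0} : Finset (Fin 3)) ≠ {2}) (congrArg Subtype.val h)
theorem ne_s12 : σs cs 1 ≠ σs cs 2 := fun h =>
  (by decide : ({1} : Finset (Fin 3)) ≠ {2}) (congrArg Subtype.val h)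
theorem ne_p02 : σ01 cs h01 h12 h02 ≠ σ02 cs h01 h12 h02 := fun h =>
  (by decide : ({0,1} : Finset (Fin 3)) ≠ {0,2}) (congrArg Subtype.val h)
theorem ne_p12 : σ01 cs h01 h12 h02 ≠ σ12 cs h01 h12 h02 := fun h =>
  (by decide : ({0,1} : Finset (Fin 3)) ≠ {1,2}) (congrArg Subtype.val h)
theorem ne_p22 : σ02 cs h01 h12 h02 ≠ σ12 cs h01 h12 h02 := fun h =>
  (by decide : ({0,2} : Finset (Fin 3)) ≠ {1,2}) (congrArg Subtype.val h)

theorem sum_kw0 (f : KW cs 0 → R) : ∑ τ, f τ = f (σe cs) := by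
  have huniv : (Finset.univ : Finset (KW cs 0)) = {σe cs} := by
    ext τ
    simp only [Finset.mem_univ, true_iff, Finset.mem_singleton]
    exact kw0_cases cs τ
  rw [huniv, Finset.sum_singleton]

theorem sum_kw1 (f : KW cs 1 → R) : ∑ τ, f τ = f (σs cs 0) + f (σs cs 1) + f (σs cs 2) := by
  classical
  have huniv : (Finset.univ : Finset (KW cs 1)) = {σs cs 0, σs cs 1, σs cs 2} := by
    ext τ
    simp only [Finset.mem_univ, true_iff, Finset.mem_insert, Finset.mem_singleton]
    exact kw1_cases cs τ
  rw [huniv, Finset.sum_insert (by simp [ne_s01 cs, ne_s02 cs]),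
    Finset.sum_insert (by simp [ne_s12 cs]), Finset.sum_singleton]
  ring

include h01 h12 h02 in
theorem sum_kw2 (f : KW cs 2 → R) :
    ∑ τ, f τ = f (σ01 cs h01 h12 h02) + f (σ02 cs h01 h12 h02) + f (σ12 cs h01 h12 h02) := by
  classical
  have huniv : (Finset.univ : Finset (KW cs 2))
      = {σ01 cs h01 h12 h02, σ02 cs h01 h12 h02, σ12 cs h01 h12 h02} := by
    ext τ
    simp only [Finset.mem_univ, true_iff, Finset.mem_insert, Finset.mem_singleton]
    exact kw2_cases cs h01 h12 h02 τ
  rw [huniv, Finset.sum_insert (by simp [ne_p02 cs h01 h12 h02, ne_p12 cs h01 h12 h02]),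
    Finset.sum_insert (by simp [ne_p22 cs h01 h12 h02]), Finset.sum_singleton]
  ring

/-- The image of the sixth cyclotomic polynomial in `R`. -/
def lq6 : R := Polynomial.toLaurent (1 - X + X ^ 2 : ℚ[X])

theorem hXne : (1 + X : ℚ[X]) ≠ 0 := fun h => by
  have := congrArg (fun p => Polynomial.coeff p 0) h
  simp at this

theorem cyc2_eq : cyc 2 = Polynomial.toLaurent (1 + X : ℚ[X]) := by
  rw [cyc, Polynomial.cyclotomic_two, add_comm]

theorem cyc3_eq : cyc 3 = Polynomial.toLaurent (1 + X + X ^ 2 : ℚ[X]) := by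
  rw [cyc, Polynomial.cyclotomic_three]
  congr 1
  ring

theorem cyc2_ne : cyc 2 ≠ 0 :=
  Polynomial.toLaurent_ne_zero.mpr (Polynomial.cyclotomic_ne_zero 2 ℚ)

theorem cyc3_ne : cyc 3 ≠ 0 :=
  Polynomial.toLaurent_ne_zero.mpr (Polynomial.cyclotomic_ne_zero 3 ℚ)

theorem pol6_eq : Polynomial.toLaurent (1+X+X^2+X^3+X^4+X^5 : ℚ[X]) = cyc 2 * cyc 3 * lq6 := by
  rw [cyc2_eq, cyc3_eq, lq6, ← map_mul, ← map_mul, Polynomial.toLaurent_inj]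
  ring

theorem bc_s_e (i : Fin 3) : bcoeff cs ({i} : Finset (Fin 3)) ∅ = cyc 2 := by
  simp only [bcoeff]
  rw [Finset.sum_singleton]
  simp [Finset.erase_singleton, Finset.filter_singleton, poin_s cs i, poin_e cs, cyc2_eq]

include h01 h12 h02 in
theorem bc_01_0 : bcoeff cs ({0,1} : Finset (Fin 3)) {0} = -(cyc 3) := by
  simp only [bcoeff]
  rw [show ({0,1} : Finset (Fin 3)) = insert 0 {1} from rfl,
    Finset.sum_insert (by decide), Finset.sum_singleton,
    show (insert 0 ({1} : Finset (Fin 3))) = {0,1} from rfl]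
  have hdiv : poin cs {0,1} / poin cs {0} = (1+X+X^2 : ℚ[X]) := by
    rw [poin01 cs h01 h12 h02, poin_s cs 0]
    exact mul_div_cancel_left₀ _ hXne
  simp (config := { decide := true }) [Finset.erase_insert, Finset.erase_insert_of_ne,
    Finset.erase_singleton, Finset.filter_insert, Finset.filter_singleton, hdiv, cyc3_eq]

include h01 h12 h02 in
theorem bc_01_1 : bcoeff cs ({0,1} : Finset (Fin 3)) {1} = cyc 3 := by
  simp only [bcoeff]
  rw [show ({0,1} : Finset (Fin 3)) = insert 0 {1} from rfl,
    Finset.sum_insert (by decide), Finset.sum_singleton,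
    show (insert 0 ({1} : Finset (Fin 3))) = {0,1} from rfl]
  have hdiv : poin cs {0,1} / poin cs {1} = (1+X+X^2 : ℚ[X]) := by
    rw [poin01 cs h01 h12 h02, poin_s cs 1]
    exact mul_div_cancel_left₀ _ hXne
  simp (config := { decide := true }) [Finset.erase_insert, Finset.erase_insert_of_ne,
    Finset.erase_singleton, Finset.filter_insert, Finset.filter_singleton, hdiv, cyc3_eq]

include h01 h12 h02 in
theorem bc_01_2 : bcoeff cs ({0,1} : Finset (Fin 3)) {2} = 0 := by
  simp only [bcoeff]
  rw [show ({0,1} : Finset (Fin 3)) = insert 0 {1} from rfl,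
    Finset.sum_insert (by decide), Finset.sum_singleton,
    show (insert 0 ({1} : Finset (Fin 3))) = {0,1} from rfl]
  simp (config := { decide := true }) [Finset.erase_insert, Finset.erase_insert_of_ne,
    Finset.erase_singleton, Finset.filter_insert, Finset.filter_singleton]

include h01 h12 h02 in
theorem bc_02_0 : bcoeff cs ({0,2} : Finset (Fin 3)) {0} = -(cyc 2) := by
  simp only [bcoeff]
  rw [show ({0,2} : Finset (Fin 3)) = insert 0 {2} from rfl,
    Finset.sum_insert (by decide), Finset.sum_singleton,
    show (insert 0 ({2} : Finset (Fin 3))) = {0,2} from rfl]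
  have hdiv : poin cs {0,2} / poin cs {0} = (1+X : ℚ[X]) := by
    rw [poin02 cs h01 h12 h02, poin_s cs 0]
    exact mul_div_cancel_left₀ _ hXne
  simp (config := { decide := true }) [Finset.erase_insert, Finset.erase_insert_of_ne,
    Finset.erase_singleton, Finset.filter_insert, Finset.filter_singleton, hdiv, cyc2_eq]

include h01 h12 h02 in
theorem bc_02_2 : bcoeff cs ({0,2} : Finset (Fin 3)) {2} = cyc 2 := by
  simp only [bcoeff]
  rw [show ({0,2} : Finset (Fin 3)) = insert 0 {2} from rfl,
    Finset.sum_insert (by decide), Finset.sum_singleton,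
    show (insert 0 ({2} : Finset (Fin 3))) = {0,2} from rfl]
  have hdiv : poin cs {0,2} / poin cs {2} = (1+X : ℚ[X]) := by
    rw [poin02 cs h01 h12 h02, poin_s cs 2]
    exact mul_div_cancel_left₀ _ hXne
  simp (config := { decide := true }) [Finset.erase_insert, Finset.erase_insert_of_ne,
    Finset.erase_singleton, Finset.filter_insert, Finset.filter_singleton, hdiv, cyc2_eq]

include h01 h12 h02 in
theorem bc_02_1 : bcoeff cs ({0,2} : Finset (Fin 3)) {1} = 0 := by
  simp only [bcoeff]
  rw [show ({0,2} : Finset (Fin 3)) = insert 0 {2} from rfl,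
    Finset.sum_insert (by decide), Finset.sum_singleton,
    show (insert 0 ({2} : Finset (Fin 3))) = {0,2} from rfl]
  simp (config := { decide := true }) [Finset.erase_insert, Finset.erase_insert_of_ne,
    Finset.erase_singleton, Finset.filter_insert, Finset.filter_singleton]

include h01 h12 h02 in
theorem bc_12_1 : bcoeff cs ({1,2} : Finset (Fin 3)) {1} = -(cyc 2 * cyc 3 * lq6) := by
  simp only [bcoeff]
  rw [show ({1,2} : Finset (Fin 3)) = insert 1 {2} from rfl,
    Finset.sum_insert (by decide), Finset.sum_singleton,
    show (insert 1 ({2} : Finset (Fin 3))) = {1,2} from rfl]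
  have hdiv : poin cs {1,2} / poin cs {1} = (1+X+X^2+X^3+X^4+X^5 : ℚ[X]) := by
    rw [poin12 cs h01 h12 h02, poin_s cs 1]
    exact mul_div_cancel_left₀ _ hXne
  simp (config := { decide := true }) [Finset.erase_insert, Finset.erase_insert_of_ne,
    Finset.erase_singleton, Finset.filter_insert, Finset.filter_singleton, hdiv, pol6_eq]

include h01 h12 h02 in
theorem bc_12_2 : bcoeff cs ({1,2} : Finset (Fin 3)) {2} = cyc 2 * cyc 3 * lq6 := by
  simp only [bcoeff]
  rw [show ({1,2} : Finset (Fin 3)) = insert 1 {2} from rfl,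
    Finset.sum_insert (by decide), Finset.sum_singleton,
    show (insert 1 ({2} : Finset (Fin 3))) = {1,2} from rfl]
  have hdiv : poin cs {1,2} / poin cs {2} = (1+X+X^2+X^3+X^4+X^5 : ℚ[X]) := by
    rw [poin12 cs h01 h12 h02, poin_s cs 2]
    exact mul_div_cancel_left₀ _ hXne
  simp (config := { decide := true }) [Finset.erase_insert, Finset.erase_insert_of_ne,
    Finset.erase_singleton, Finset.filter_insert, Finset.filter_singleton, hdiv, pol6_eq]

include h01 h12 h02 in
theorem bc_12_0 : bcoeff cs ({1,2} : Finset (Fin 3)) {0} = 0 := by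
  simp only [bcoeff]
  rw [show ({1,2} : Finset (Fin 3)) = insert 1 {2} from rfl,
    Finset.sum_insert (by decide), Finset.sum_singleton,
    show (insert 1 ({2} : Finset (Fin 3))) = {1,2} from rfl]
  simp (config := { decide := true }) [Finset.erase_insert, Finset.erase_insert_of_ne,
    Finset.erase_singleton, Finset.filter_insert, Finset.filter_singleton]

theorem bdry_apply (k : ℕ) (y : KW cs (k+1) → R) (τ : KW cs k) :
    (bdry cs k) y τ = ∑ σ : KW cs (k+1), bcoeff cs σ.1 τ.1 * y σ := by
  simp [bdry, Matrix.mulVecLin_apply, Matrix.mulVec, dotProduct]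

include h01 h12 h02 in
theorem bdry0_at (x : KW cs 1 → R) :
    (bdry cs 0) x (σe cs) = cyc 2 * x (σs cs 0) + cyc 2 * x (σs cs 1) + cyc 2 * x (σs cs 2) := by
  rw [bdry_apply, sum_kw1 cs (fun σ => bcoeff cs σ.1 (σe cs).1 * x σ)]
  simp only [σs, σe]
  rw [bc_s_e cs 0, bc_s_e cs 1, bc_s_e cs 2]

include h01 h12 h02 in
theorem bdry1_at_0 (y : KW cs 2 → R) :
    (bdry cs 1) y (σs cs 0) =
      -(cyc 3 * y (σ01 cs h01 h12 h02)) - cyc 2 * y (σ02 cs h01 h12 h02) := by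
  rw [bdry_apply, sum_kw2 cs h01 h12 h02 (fun σ => bcoeff cs σ.1 (σs cs 0).1 * y σ)]
  simp only [σs, σ01, σ02, σ12]
  rw [bc_01_0 cs h01 h12 h02, bc_02_0 cs h01 h12 h02, bc_12_0 cs h01 h12 h02]
  ring

include h01 h12 h02 in
theorem bdry1_at_1 (y : KW cs 2 → R) :
    (bdry cs 1) y (σs cs 1) =
      cyc 3 * y (σ01 cs h01 h12 h02) - cyc 2 * cyc 3 * lq6 * y (σ12 cs h01 h12 h02) := by
  rw [bdry_apply, sum_kw2 cs h01 h12 h02 (fun σ => bcoeff cs σ.1 (σs cs 1).1 * y σ)]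
  simp only [σs, σ01, σ02, σ12]
  rw [bc_01_1 cs h01 h12 h02, bc_02_1 cs h01 h12 h02, bc_12_1 cs h01 h12 h02]
  ring

include h01 h12 h02 in
theorem bdry1_at_2 (y : KW cs 2 → R) :
    (bdry cs 1) y (σs cs 2) =
      cyc 2 * y (σ02 cs h01 h12 h02) + cyc 2 * cyc 3 * lq6 * y (σ12 cs h01 h12 h02) := by
  rw [bdry_apply, sum_kw2 cs h01 h12 h02 (fun σ => bcoeff cs σ.1 (σs cs 2).1 * y σ)]
  simp only [σs, σ01, σ02, σ12]
  rw [bc_01_2 cs h01 h12 h02, bc_02_2 cs h01 h12 h02, bc_12_2 cs h01 h12 h02]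
  ring

include h01 h12 h02 in
theorem bdry2_at (y : KW cs 3 → R) (τ : KW cs 2) : (bdry cs 2) y τ = 0 := by
  rw [bdry_apply]
  haveI := kw_empty cs h01 h12 h02 3 le_rfl
  rw [Finset.univ_eq_empty, Finset.sum_empty]

theorem quot_iso {M Q : Type*} [AddCommGroup M] [Module R M] [AddCommGroup Q] [Module R Q]
    (p N : Submodule R M) (f : M →ₗ[R] Q)
    (h1 : ∀ x ∈ p, (f x = 0 ↔ x ∈ N))
    (h2 : ∀ q : Q, ∃ x ∈ p, f x = q) :
    Nonempty ((p ⧸ (Submodule.comap p.subtype N)) ≃ₗ[R] Q) := by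
  let g := f.comp p.subtype
  have hker : LinearMap.ker g = Submodule.comap p.subtype N := by
    ext x
    exact h1 x.1 x.2
  have hsur : Function.Surjective g := fun q => by
    obtain ⟨x, hx, hfx⟩ := h2 q
    exact ⟨⟨x, hx⟩, hfx⟩
  exact ⟨(Submodule.quotEquivOfEq _ _ hker.symm).trans (g.quotKerEquivOfSurjective hsur)⟩

include h01 h12 h02 in
theorem H0iso : Nonempty (Hgy cs 0 ≃ₗ[R] CycQuot 2) := by
  classical
  refine quot_iso (cycles cs 0) (LinearMap.range (bdry cs 0))
    ((Ideal.span {cyc 2}).mkQ.comp (LinearMap.proj (σe cs))) ?_ ?_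
  · intro x _
    simp only [LinearMap.comp_apply, Submodule.mkQ_apply, LinearMap.proj_apply,
      Submodule.Quotient.mk_eq_zero]
    constructor
    · intro h0
      obtain ⟨a, ha⟩ := Ideal.mem_span_singleton'.mp h0
      refine ⟨fun σ => if σ = σs cs 0 then a else 0, ?_⟩
      funext τ
      rw [kw0_cases cs τ, bdry0_at cs h01 h12 h02]
      beta_reduce
      rw [if_pos rfl, if_neg (ne_s01 cs).symm, if_neg (ne_s02 cs).symm]
      linear_combination ha
    · rintro ⟨y, rfl⟩
      rw [bdry0_at cs h01 h12 h02]
      exact Ideal.mem_span_singleton'.mpr ⟨y (σs cs 0) + y (σs cs 1) + y (σs cs 2), by ring⟩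
  · intro q
    obtain ⟨r, rfl⟩ := Submodule.mkQ_surjective _ q
    exact ⟨fun _ => r, by rw [show cycles cs 0 = ⊤ from rfl]; trivial, rfl⟩

include h01 h12 h02 in
theorem H1iso : Nonempty (Hgy cs 1 ≃ₗ[R] (CycQuot 2 × CycQuot 3)) := by
  classical
  refine quot_iso (cycles cs 1) (LinearMap.range (bdry cs 1))
    (LinearMap.prod ((Ideal.span {cyc 2}).mkQ.comp (LinearMap.proj (σs cs 2)))
      ((Ideal.span {cyc 3}).mkQ.comp (LinearMap.proj (σs cs 1)))) ?_ ?_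
  · intro x hx
    have hx0 : (bdry cs 0) x = 0 := LinearMap.mem_ker.mp hx
    have hsum0 : cyc 2 * x (σs cs 0) + cyc 2 * x (σs cs 1) + cyc 2 * x (σs cs 2) = 0 := by
      rw [← bdry0_at cs h01 h12 h02, hx0, Pi.zero_apply]
    have hsum : x (σs cs 0) + x (σs cs 1) + x (σs cs 2) = 0 := by
      apply mul_left_cancel₀ cyc2_ne
      rw [mul_zero]
      linear_combination hsum0
    rw [Prod.ext_iff]
    simp only [LinearMap.prod_apply, Function.prod, LinearMap.comp_apply, Submodule.mkQ_apply,
      LinearMap.proj_apply, Submodule.Quotient.mk_eq_zero, Prod.fst_zero, Prod.snd_zero]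
    constructor
    · rintro ⟨h2', h3'⟩
      obtain ⟨a, ha⟩ := Ideal.mem_span_singleton'.mp h2'
      obtain ⟨b, hb⟩ := Ideal.mem_span_singleton'.mp h3'
      refine ⟨fun σ => if σ = σ01 cs h01 h12 h02 then b
        else if σ = σ02 cs h01 h12 h02 then a else 0, ?_⟩
      funext τ
      rcases kw1_cases cs τ with rfl | rfl | rfl
      · rw [bdry1_at_0 cs h01 h12 h02]
        beta_reduce
        rw [if_pos rfl, if_neg (ne_p02 cs h01 h12 h02).symm, if_pos rfl]
        linear_combination -hb - ha - hsum
      · rw [bdry1_at_1 cs h01 h12 h02]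
        beta_reduce
        rw [if_pos rfl, if_neg (ne_p12 cs h01 h12 h02).symm, if_neg (ne_p22 cs h01 h12 h02).symm]
        linear_combination hb
      · rw [bdry1_at_2 cs h01 h12 h02]
        beta_reduce
        rw [if_neg (ne_p02 cs h01 h12 h02).symm, if_pos rfl,
          if_neg (ne_p12 cs h01 h12 h02).symm, if_neg (ne_p22 cs h01 h12 h02).symm]
        linear_combination ha
    · rintro ⟨y, rfl⟩
      constructor
      · rw [bdry1_at_2 cs h01 h12 h02]
        beta_reduce
        exact Ideal.mem_span_singleton'.mpr
          ⟨y (σ02 cs h01 h12 h02) + cyc 3 * lq6 * y (σ12 cs h01 h12 h02), by ring⟩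
      · rw [bdry1_at_1 cs h01 h12 h02]
        beta_reduce
        exact Ideal.mem_span_singleton'.mpr
          ⟨y (σ01 cs h01 h12 h02) - cyc 2 * lq6 * y (σ12 cs h01 h12 h02), by ring⟩
  · rintro ⟨q1, q2⟩
    obtain ⟨r, rfl⟩ := Submodule.mkQ_surjective _ q1
    obtain ⟨t, rfl⟩ := Submodule.mkQ_surjective _ q2
    refine ⟨fun τ => if τ = σs cs 0 then -t - r else if τ = σs cs 1 then t else r, ?_, ?_⟩
    · show _ ∈ LinearMap.ker (bdry cs 0)
      rw [LinearMap.mem_ker]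
      funext τ
      rw [kw0_cases cs τ, bdry0_at cs h01 h12 h02, Pi.zero_apply]
      beta_reduce
      rw [if_pos rfl, if_neg (ne_s01 cs).symm, if_pos rfl, if_neg (ne_s02 cs).symm,
        if_neg (ne_s12 cs).symm]
      ring
    · simp only [LinearMap.prod_apply, Function.prod, LinearMap.comp_apply, Submodule.mkQ_apply,
        LinearMap.proj_apply]
      simp [Ne.symm (ne_s01 cs), Ne.symm (ne_s02 cs), Ne.symm (ne_s12 cs)]

include h01 h12 h02 in
theorem H2iso : Nonempty (Hgy cs 2 ≃ₗ[R] R) := by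
  classical
  refine quot_iso (cycles cs 2) (LinearMap.range (bdry cs 2))
    (LinearMap.proj (σ12 cs h01 h12 h02)) ?_ ?_
  · intro x hx
    have hx0 : (bdry cs 1) x = 0 := LinearMap.mem_ker.mp hx
    simp only [LinearMap.proj_apply]
    constructor
    · intro h12'
      have hk1 : cyc 3 * x (σ01 cs h01 h12 h02)
          - cyc 2 * cyc 3 * lq6 * x (σ12 cs h01 h12 h02) = 0 := by
        rw [← bdry1_at_1 cs h01 h12 h02, hx0, Pi.zero_apply]
      have hk2 : cyc 2 * x (σ02 cs h01 h12 h02)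
          + cyc 2 * cyc 3 * lq6 * x (σ12 cs h01 h12 h02) = 0 := by
        rw [← bdry1_at_2 cs h01 h12 h02, hx0, Pi.zero_apply]
      rw [h12'] at hk1 hk2
      have h01' : x (σ01 cs h01 h12 h02) = 0 := by
        apply mul_left_cancel₀ cyc3_ne
        rw [mul_zero]
        linear_combination hk1
      have h02' : x (σ02 cs h01 h12 h02) = 0 := by
        apply mul_left_cancel₀ cyc2_ne
        rw [mul_zero]
        linear_combination hk2
      refine ⟨0, ?_⟩
      rw [map_zero]
      funext τ
      rcases kw2_cases cs h01 h12 h02 τ with rfl | rfl | rfl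
      · rw [Pi.zero_apply, h01']
      · rw [Pi.zero_apply, h02']
      · rw [Pi.zero_apply, h12']
    · rintro ⟨y, rfl⟩
      rw [bdry2_at cs h01 h12 h02]
  · intro r
    refine ⟨fun σ => if σ = σ01 cs h01 h12 h02 then cyc 2 * lq6 * r
      else if σ = σ02 cs h01 h12 h02 then -(cyc 3 * lq6 * r) else r, ?_, ?_⟩
    · show _ ∈ LinearMap.ker (bdry cs 1)
      rw [LinearMap.mem_ker]
      funext τ
      rcases kw1_cases cs τ with rfl | rfl | rfl
      · rw [bdry1_at_0 cs h01 h12 h02, Pi.zero_apply]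
        beta_reduce
        rw [if_pos rfl, if_neg (ne_p02 cs h01 h12 h02).symm, if_pos rfl]
        ring
      · rw [bdry1_at_1 cs h01 h12 h02, Pi.zero_apply]
        beta_reduce
        rw [if_pos rfl, if_neg (ne_p12 cs h01 h12 h02).symm, if_neg (ne_p22 cs h01 h12 h02).symm]
        ring
      · rw [bdry1_at_2 cs h01 h12 h02, Pi.zero_apply]
        beta_reduce
        rw [if_neg (ne_p02 cs h01 h12 h02).symm, if_pos rfl,
          if_neg (ne_p12 cs h01 h12 h02).symm, if_neg (ne_p22 cs h01 h12 h02).symm]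
        ring
    · simp only [LinearMap.proj_apply]
      rw [if_neg (ne_p12 cs h01 h12 h02).symm, if_neg (ne_p22 cs h01 h12 h02).symm]

include h01 h12 h02 in
theorem Hk_subsingleton (k : ℕ) (hk : 3 ≤ k) : Subsingleton (Hgy cs k) := by
  haveI hKW : IsEmpty (KW cs k) := kw_empty cs h01 h12 h02 k hk
  haveI hfun : Subsingleton (KW cs k → R) := ⟨fun a b => funext fun x => hKW.elim x⟩
  haveI hcyc : Subsingleton (cycles cs k) := ⟨fun a b => Subtype.ext (Subsingleton.elim a.1 b.1)⟩
  refine ⟨fun a b => ?_⟩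
  obtain ⟨x, rfl⟩ := Submodule.mkQ_surjective _ a
  obtain ⟨y, rfl⟩ := Submodule.mkQ_surjective _ b
  rw [Subsingleton.elim x y]

end G2aux
end

/-- Homology of the weighted complex for the affine Coxeter system of type `G̃₂`. -/
theorem homology_affine_G2 {W : Type*} [Group W] {Mat : CoxeterMatrix (Fin 3)}
    (cs : CoxeterSystem Mat W)
    (h01 : Mat.M 0 1 = 3) (h12 : Mat.M 1 2 = 6) (h02 : Mat.M 0 2 = 2) :
    Nonempty (Hgy cs 0 ≃ₗ[R] (CycQuot 2)) ∧
    Nonempty (Hgy cs 1 ≃ₗ[R] (CycQuot 2 × CycQuot 3)) ∧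
    Nonempty (Hgy cs 2 ≃ₗ[R] R) ∧
    (∀ k, 3 ≤ k → Subsingleton (Hgy cs k)) := by
  exact ⟨G2aux.H0iso cs h01 h12 h02, G2aux.H1iso cs h01 h12 h02, G2aux.H2iso cs h01 h12 h02,
    fun k hk => G2aux.Hk_subsingleton cs h01 h12 h02 k hk⟩
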